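/- If A is a Baer *-algebra and S ⊆ A is a self-adjoint subset (S* = S), then the commutant S' = {x ∈ A : xs = sx for all s ∈ S} is a Baer *-algebra in its own right: the right annihilator in S' of any nonempty subset of S' is generated by a projection lying in S'. -/
import Mathlib


section
variable {A : Type*} [Ring A] [Algebra ℂ A] [StarRing A]

def IsProjection (e : A) : Prop := star e = e ∧ e * e = e

def IsBaerStar (A : Type*) [Ring A] [Algebra ℂ A] [StarRing A] : Prop :=
  ∀ S : Set A, S.Nonempty → ∃ e : A, IsProjection e ∧
    {x : A | ∀ s ∈ S, s * x = 0} = {x : A | ∃ a : A, x = e * a}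

/-- The commutant of a subset. -/
def Commutant (S : Set A) : Set A := {x : A | ∀ s ∈ S, x * s = s * x}

end

/-- the commutant of a self-adjoint subset of a Baer *-algebra is
itself a Baer *-algebra. -/
theorem commutant_of_selfadjoint_set_is_baer
    {A : Type*} [Ring A] [Algebra ℂ A] [StarRing A]
    (hA : IsBaerStar A) (S : Set A) (hSsa : (fun s => star s) '' S = S)
    (T : Set A) (hT : T.Nonempty) (hTsub : T ⊆ Commutant S) :
    ∃ g : A, IsProjection g ∧ g ∈ Commutant S ∧
      {y : A | y ∈ Commutant S ∧ ∀ t ∈ T, t * y = 0} =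
        {y : A | ∃ a ∈ Commutant S, y = g * a} := by
  obtain ⟨e, ⟨hestar, heid⟩, hann⟩ := hA T hT
  have hmem : ∀ x : A, (∀ t ∈ T, t * x = 0) ↔ ∃ a, x = e * a := by
    intro x
    constructor
    · intro h
      have hx : x ∈ {x : A | ∀ s ∈ T, s * x = 0} := h
      rw [hann] at hx; exact hx
    · intro h
      have hx : x ∈ {x : A | ∃ a : A, x = e * a} := h
      rw [← hann] at hx; exact hx
  have hte : ∀ t ∈ T, t * e = 0 := fun t ht => ((hmem e).2 ⟨e, heid.symm⟩) t ht
  have hese : ∀ s ∈ S, e * (s * e) = s * e := by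
    intro s hs
    obtain ⟨a, ha⟩ := (hmem (s * e)).1 (fun t ht => by
      rw [← mul_assoc, hTsub ht s hs, mul_assoc, hte t ht, mul_zero])
    rw [ha, ← mul_assoc, heid]
  have hcomm : e ∈ Commutant S := by
    intro s hs
    have h1 : e * (s * e) = s * e := hese s hs
    have hs' : star s ∈ S := by rw [← hSsa]; exact ⟨s, hs, rfl⟩
    have h2 : e * (star s * e) = star s * e := hese _ hs'
    have h3 : e * (s * e) = e * s := by
      have := congrArg star h2
      simpa [star_mul, hestar, star_star, mul_assoc] using this
    rw [← h3, h1]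
  refine ⟨e, ⟨hestar, heid⟩, hcomm, ?_⟩
  ext y
  simp only [Set.mem_setOf_eq]
  constructor
  · rintro ⟨hyS, hty⟩
    obtain ⟨a, ha⟩ := (hmem y).1 hty
    have : e * y = y := by rw [ha, ← mul_assoc, heid]
    exact ⟨y, hyS, this.symm⟩
  · rintro ⟨a, haS, rfl⟩
    refine ⟨?_, ?_⟩
    · intro s hs
      calc e * a * s = e * (s * a) := by rw [mul_assoc, haS s hs]
        _ = s * (e * a) := by rw [← mul_assoc, hcomm s hs, mul_assoc]
    · intro t ht
      rw [← mul_assoc, hte t ht, zero_mul]
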